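/- Let F be a distribution on [0,∞) satisfying F̄(x) = o((F^{*2})̄(x)) as x → ∞. Then for every integer k ≥ 1, (F^{*k})̄(x) = o((F^{*(k+1)})̄(x)) as x → ∞. -/

import Mathlib

open MeasureTheory Filter Set Asymptotics

/-- The tail `F̄(x) = μ((x,∞))` of a distribution `μ` on `ℝ`. -/
noncomputable def tail (μ : MeasureTheory.Measure ℝ) (x : ℝ) : ℝ := (μ (Set.Ioi x)).toReal

/-- Convolution of two distributions on `ℝ`. -/
noncomputable def mconv (μ ν : MeasureTheory.Measure ℝ) : MeasureTheory.Measure ℝ :=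
  MeasureTheory.Measure.map (fun p : ℝ × ℝ => p.1 + p.2) (μ.prod ν)

/-- `iconv μ k` is the `k`-fold convolution `μ^{*k}` (with `μ^{*0} = δ₀`). -/
noncomputable def iconv (μ : MeasureTheory.Measure ℝ) : ℕ → MeasureTheory.Measure ℝ
  | 0 => MeasureTheory.Measure.dirac 0
  | n + 1 => mconv (iconv μ n) μ

/-- The class `L(γ)`: `F̄(x-t) ~ e^{γt} F̄(x)` as `x → ∞`, for every `t`. -/
def MemL (γ : ℝ) (μ : MeasureTheory.Measure ℝ) : Prop :=
  ∀ t : ℝ, Filter.Tendsto (fun x => tail μ (x - t) / tail μ x) Filter.atTop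
    (nhds (Real.exp (γ * t)))

/-- The class `OS`: `limsup_{x→∞} (F*F)̄(x) / F̄(x) < ∞`. -/
def MemOS (μ : MeasureTheory.Measure ℝ) : Prop :=
  Filter.IsBoundedUnder (· ≤ ·) Filter.atTop (fun x => tail (mconv μ μ) x / tail μ x)

namespace Stmt3Aux

open ENNReal

instance mconv_sfinite (μ ν : Measure ℝ) [SFinite μ] [SFinite ν] : SFinite (mconv μ ν) :=
  inferInstanceAs (SFinite (MeasureTheory.Measure.map _ _))

lemma tail_nonneg (μ : Measure ℝ) (x : ℝ) : 0 ≤ tail μ x := ENNReal.toReal_nonneg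

lemma meas_tail (ν : Measure ℝ) (x : ℝ) : Measurable fun s : ℝ => ν (Set.Ioi (x - s)) := by
  have hmono : Monotone fun s : ℝ => ν (Set.Ioi (x - s)) := fun a b hab =>
    measure_mono (Set.Ioi_subset_Ioi (by linarith))
  exact hmono.measurable

lemma mconv_Ioi (μ ν : Measure ℝ) [SFinite μ] [SFinite ν] (x : ℝ) :
    mconv μ ν (Set.Ioi x) = ∫⁻ a, ν (Set.Ioi (x - a)) ∂μ := by
  rw [mconv, Measure.map_apply measurable_add measurableSet_Ioi,
    Measure.prod_apply (measurable_add measurableSet_Ioi)]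
  refine lintegral_congr fun a => ?_
  congr 1
  ext b
  simp [Set.mem_Ioi, sub_lt_iff_lt_add']

lemma mconv_Ioi' (μ ν : Measure ℝ) [SFinite μ] [SFinite ν] (x : ℝ) :
    mconv μ ν (Set.Ioi x) = ∫⁻ b, μ (Set.Ioi (x - b)) ∂ν := by
  rw [mconv, Measure.map_apply measurable_add measurableSet_Ioi,
    Measure.prod_apply_symm (measurable_add measurableSet_Ioi)]
  refine lintegral_congr fun b => ?_
  congr 1
  ext a
  simp [Set.mem_Ioi, sub_lt_iff_lt_add]

lemma lintegral_mconv (μ ν : Measure ℝ) [SFinite μ] [SFinite ν] {g : ℝ → ℝ≥0∞}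
    (hg : Measurable g) :
    ∫⁻ s, g s ∂(mconv μ ν) = ∫⁻ a, ∫⁻ b, g (a + b) ∂ν ∂μ := by
  rw [mconv, lintegral_map hg measurable_add]
  exact MeasureTheory.lintegral_prod _ (hg.comp measurable_add).aemeasurable

lemma mconv_dirac (F : Measure ℝ) [SFinite F] : mconv (Measure.dirac 0) F = F := by
  rw [mconv, Measure.dirac_prod, Measure.map_map measurable_add measurable_prodMk_left]
  have : (fun p : ℝ × ℝ => p.1 + p.2) ∘ Prod.mk (0:ℝ) = id := by
    funext b; simp
  rw [this, Measure.map_id]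

lemma iconv_prob (F : Measure ℝ) [IsProbabilityMeasure F] (k : ℕ) :
    IsProbabilityMeasure (iconv F k) := by
  induction k with
  | zero => rw [iconv]; infer_instance
  | succ n ih =>
    rw [iconv, mconv]
    exact Measure.isProbabilityMeasure_map measurable_add.aemeasurable

lemma iconv_one (F : Measure ℝ) [SFinite F] : iconv F 1 = F := by
  rw [iconv, iconv]; exact mconv_dirac F

lemma iconv_two (F : Measure ℝ) [SFinite F] : iconv F 2 = mconv F F := by
  rw [iconv, iconv_one]

lemma mconv2_Ioi (μ F : Measure ℝ) [SFinite μ] [SFinite F] (x : ℝ) :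
    mconv (mconv μ F) F (Set.Ioi x) = ∫⁻ a, mconv F F (Set.Ioi (x - a)) ∂μ := by
  rw [mconv_Ioi, lintegral_mconv μ F (meas_tail F x)]
  refine lintegral_congr fun a => ?_
  rw [mconv_Ioi]
  refine lintegral_congr fun b => ?_
  congr 2
  ring

end Stmt3Aux

open Stmt3Aux ENNReal in
theorem stmt3 (F : Measure ℝ) [IsProbabilityMeasure F] (hs : F (Set.Iio 0) = 0)
    (h : (fun x => tail F x) =o[Filter.atTop] fun x => tail (iconv F 2) x) :
    ∀ k : ℕ, 1 ≤ k →
      (fun x => tail (iconv F k) x) =o[Filter.atTop] fun x => tail (iconv F (k + 1)) x := by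
  by_cases hA : ∃ M, F (Set.Ioi M) = 0
  · -- compactly supported case: all tails are eventually zero
    obtain ⟨M, hM⟩ := hA
    set N := max M 0 with hNdef
    have hN : F (Set.Ioi N) = 0 :=
      measure_mono_null (Set.Ioi_subset_Ioi (le_max_left _ _)) hM
    have key : ∀ k : ℕ, iconv F k (Set.Ioi ((k : ℝ) * N)) = 0 := by
      intro k
      induction k with
      | zero => simp [iconv]
      | succ n ih =>
        haveI := iconv_prob F n
        rw [iconv, mconv_Ioi]
        have hae : ∀ᵐ s ∂(iconv F n), s ≤ (n : ℝ) * N := by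
          rw [ae_iff]
          simp only [not_le]
          exact ih
        have : ∫⁻ s, F (Set.Ioi (((n : ℝ) + 1) * N - s)) ∂(iconv F n)
            = ∫⁻ s, (0 : ℝ≥0∞) ∂(iconv F n) := by
          refine lintegral_congr_ae ?_
          filter_upwards [hae] with s hsle
          have hsub : Set.Ioi (((n : ℝ) + 1) * N - s) ⊆ Set.Ioi N :=
            Set.Ioi_subset_Ioi (by nlinarith)
          exact measure_mono_null hsub hN
        push_cast
        rw [this, lintegral_zero]
    intro k hk
    rw [isLittleO_iff]
    intro c hc
    filter_upwards [eventually_ge_atTop ((k : ℝ) * N)] with x hx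
    have h0 : iconv F k (Set.Ioi x) = 0 :=
      measure_mono_null (Set.Ioi_subset_Ioi hx) (key k)
    have : tail (iconv F k) x = 0 := by rw [tail, h0]; simp
    rw [this]
    simp only [norm_zero]
    positivity
  · push_neg at hA
    intro k hk
    induction k, hk using Nat.le_induction with
    | base =>
      rw [iconv_one F]
      exact h
    | succ k hk IH =>
      -- A = iconv F k, B = iconv F (k+1), C = iconv F (k+2)
      haveI hPA := iconv_prob F k
      haveI hPB := iconv_prob F (k + 1)
      haveI hPC := iconv_prob F (k + 2)
      haveI hP2 := iconv_prob F 2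
      set A := iconv F k with hAdef
      set B := iconv F (k + 1) with hBdef
      set C := iconv F (k + 2) with hCdef
      have hBA : B = mconv A F := by rw [hBdef, iconv]
      have hCB : C = mconv B F := by rw [hCdef, iconv]
      rw [isLittleO_iff] at IH h ⊢
      intro c hc
      have hc2 : (0 : ℝ) < c / 2 := by linarith
      obtain ⟨x₀, hx₀⟩ := (eventually_atTop).1 (h hc2)
      set K := F (Set.Ioi x₀) with hKdef
      have hK0 : K ≠ 0 := hA x₀
      have hKt : K ≠ ⊤ := measure_ne_top F _
      have hKr : 0 < K.toReal := ENNReal.toReal_pos hK0 hKt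
      have hc2K : (0 : ℝ) < c / 2 * K.toReal := by positivity
      obtain ⟨x₁, hx₁⟩ := (eventually_atTop).1 (IH hc2K)
      -- ENNReal versions of the two hypotheses
      have hF2 : ∀ y, x₀ ≤ y →
          F (Set.Ioi y) ≤ ENNReal.ofReal (c / 2) * iconv F 2 (Set.Ioi y) := by
        intro y hy
        have hr := hx₀ y hy
        rw [Real.norm_of_nonneg (tail_nonneg _ _),
          Real.norm_of_nonneg (tail_nonneg _ _)] at hr
        calc F (Set.Ioi y) = ENNReal.ofReal (tail F y) :=
              (ENNReal.ofReal_toReal (measure_ne_top F _)).symm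
          _ ≤ ENNReal.ofReal (c / 2 * tail (iconv F 2) y) := ENNReal.ofReal_le_ofReal hr
          _ = ENNReal.ofReal (c / 2) * ENNReal.ofReal (tail (iconv F 2) y) :=
              ENNReal.ofReal_mul hc2.le
          _ = ENNReal.ofReal (c / 2) * iconv F 2 (Set.Ioi y) := by
              rw [tail, ENNReal.ofReal_toReal (measure_ne_top _ _)]
      have hAB : ∀ y, x₁ ≤ y →
          A (Set.Ioi y) ≤ ENNReal.ofReal (c / 2 * K.toReal) * B (Set.Ioi y) := by
        intro y hy
        have hr := hx₁ y hy
        rw [Real.norm_of_nonneg (tail_nonneg _ _),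
          Real.norm_of_nonneg (tail_nonneg _ _)] at hr
        calc A (Set.Ioi y) = ENNReal.ofReal (tail A y) :=
              (ENNReal.ofReal_toReal (measure_ne_top A _)).symm
          _ ≤ ENNReal.ofReal (c / 2 * K.toReal * tail B y) := ENNReal.ofReal_le_ofReal hr
          _ = ENNReal.ofReal (c / 2 * K.toReal) * ENNReal.ofReal (tail B y) :=
              ENNReal.ofReal_mul hc2K.le
          _ = ENNReal.ofReal (c / 2 * K.toReal) * B (Set.Ioi y) := by
              rw [tail, ENNReal.ofReal_toReal (measure_ne_top _ _)]
      filter_upwards [eventually_ge_atTop (x₀ + x₁)] with x hx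
      -- key chain in ℝ≥0∞
      have hsplit : B (Set.Ioi x) =
          (∫⁻ s in Set.Iic (x - x₀), F (Set.Ioi (x - s)) ∂A)
            + ∫⁻ s in Set.Ioi (x - x₀), F (Set.Ioi (x - s)) ∂A := by
        rw [hBA, mconv_Ioi,
          ← lintegral_add_compl (fun s => F (Set.Ioi (x - s))) (measurableSet_Iic (a := x - x₀)),
          Set.compl_Iic]
      have hT1 : (∫⁻ s in Set.Iic (x - x₀), F (Set.Ioi (x - s)) ∂A)
          ≤ ENNReal.ofReal (c / 2) * C (Set.Ioi x) := by
        calc (∫⁻ s in Set.Iic (x - x₀), F (Set.Ioi (x - s)) ∂A)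
            ≤ ∫⁻ s in Set.Iic (x - x₀),
                ENNReal.ofReal (c / 2) * iconv F 2 (Set.Ioi (x - s)) ∂A := by
              refine setLIntegral_mono' measurableSet_Iic fun s hsle => ?_
              exact hF2 _ (by simp only [Set.mem_Iic] at hsle; linarith)
          _ ≤ ∫⁻ s, ENNReal.ofReal (c / 2) * iconv F 2 (Set.Ioi (x - s)) ∂A :=
              setLIntegral_le_lintegral _ _
          _ = ENNReal.ofReal (c / 2) * ∫⁻ s, iconv F 2 (Set.Ioi (x - s)) ∂A :=
              lintegral_const_mul _ (meas_tail _ x)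
          _ = ENNReal.ofReal (c / 2) * C (Set.Ioi x) := by
              rw [hCdef, show iconv F (k + 2) = mconv (mconv A F) F by
                  rw [hAdef, iconv, iconv],
                mconv2_Ioi, iconv_two F]
      have hBC : B (Set.Ioi (x - x₀)) * K ≤ C (Set.Ioi x) := by
        calc B (Set.Ioi (x - x₀)) * K
            = ∫⁻ t in Set.Ioi x₀, B (Set.Ioi (x - x₀)) ∂F := by
              rw [setLIntegral_const]
          _ ≤ ∫⁻ t in Set.Ioi x₀, B (Set.Ioi (x - t)) ∂F := by
              refine setLIntegral_mono' measurableSet_Ioi fun t ht => ?_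
              simp only [Set.mem_Ioi] at ht
              exact measure_mono (Set.Ioi_subset_Ioi (by linarith))
          _ ≤ ∫⁻ t, B (Set.Ioi (x - t)) ∂F := setLIntegral_le_lintegral _ _
          _ = C (Set.Ioi x) := by rw [hCB, mconv_Ioi']
      have hT2 : (∫⁻ s in Set.Ioi (x - x₀), F (Set.Ioi (x - s)) ∂A)
          ≤ ENNReal.ofReal (c / 2) * C (Set.Ioi x) := by
        calc (∫⁻ s in Set.Ioi (x - x₀), F (Set.Ioi (x - s)) ∂A)
            ≤ ∫⁻ _ in Set.Ioi (x - x₀), (1 : ℝ≥0∞) ∂A :=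
              setLIntegral_mono' measurableSet_Ioi fun s _ => prob_le_one
          _ = A (Set.Ioi (x - x₀)) := by rw [setLIntegral_const, one_mul]
          _ ≤ ENNReal.ofReal (c / 2 * K.toReal) * B (Set.Ioi (x - x₀)) :=
              hAB _ (by linarith)
          _ = ENNReal.ofReal (c / 2) * (K * B (Set.Ioi (x - x₀))) := by
              rw [ENNReal.ofReal_mul hc2.le, ENNReal.ofReal_toReal hKt, mul_assoc]
          _ ≤ ENNReal.ofReal (c / 2) * C (Set.Ioi x) := by
              refine mul_le_mul_right ?_ _
              rw [mul_comm]
              exact hBC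
      have hmain : B (Set.Ioi x) ≤ ENNReal.ofReal c * C (Set.Ioi x) := by
        calc B (Set.Ioi x) = _ + _ := hsplit
          _ ≤ ENNReal.ofReal (c / 2) * C (Set.Ioi x)
              + ENNReal.ofReal (c / 2) * C (Set.Ioi x) := add_le_add hT1 hT2
          _ = (ENNReal.ofReal (c / 2) + ENNReal.ofReal (c / 2)) * C (Set.Ioi x) := by
              rw [add_mul]
          _ = ENNReal.ofReal c * C (Set.Ioi x) := by
              rw [← ENNReal.ofReal_add hc2.le hc2.le]
              norm_num
      -- back to the real world
      have hfin : ENNReal.ofReal c * C (Set.Ioi x) ≠ ⊤ :=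
        ENNReal.mul_ne_top ENNReal.ofReal_ne_top (measure_ne_top _ _)
      have := ENNReal.toReal_mono hfin hmain
      rw [ENNReal.toReal_mul, ENNReal.toReal_ofReal hc.le] at this
      rw [Real.norm_of_nonneg (tail_nonneg _ _), Real.norm_of_nonneg (tail_nonneg _ _)]
      exact this
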